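/- arXiv:2004.03716 — 2 statements merged into one kernel-verified Lean document; each statement's English description precedes it below -/
import Mathlib

section
/- Let R be a finite binary relation over attributes (A,B) and S a finite binary relation over attributes (B,C). Suppose every A-value in R appears in at least h tuples of R (for some real h > 0), and every B-value in S appears in at most ℓ tuples of S (for some real ℓ > 0). Then the size of the join V(a,c) = ∃b. R(a,b) ∧ S(b,c), counted as the number of distinct (a,c) pairs, is at most min(|R|·ℓ, |S|·(|R|/h)). -/
/-- Size bound on the join `V(a,c) = ∃ b, R(a,b) ∧ S(b,c)` when every `A`-value
in `R` has degree at least `h` and every `B`-value in `S` has degree at most `ℓ`. -/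
theorem join_size_bound {α β γ : Type*} [DecidableEq α] [DecidableEq β] [DecidableEq γ]
    (R : Finset (α × β)) (S : Finset (β × γ)) (h ℓ : ℝ) (hh : 0 < h) (hl : 0 < ℓ)
    (hR : ∀ a ∈ R.image Prod.fst, h ≤ ((R.filter (fun p => p.1 = a)).card : ℝ))
    (hS : ∀ b ∈ S.image Prod.fst, ((S.filter (fun p => p.1 = b)).card : ℝ) ≤ ℓ) :
    ((((R ×ˢ S).filter (fun p => p.1.2 = p.2.1)).image
        (fun p => (p.1.1, p.2.2))).card : ℝ) ≤
      min ((R.card : ℝ) * ℓ) ((S.card : ℝ) * ((R.card : ℝ) / h)) := by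
  set T := (R ×ˢ S).filter (fun p => p.1.2 = p.2.1) with hT
  set V := T.image (fun p => (p.1.1, p.2.2)) with hV
  refine le_min ?_ ?_
  · -- |V| ≤ |T| = ∑_{r∈R} deg_S(r.2) ≤ |R|·ℓ
    have hTcard : T.card = ∑ r ∈ R, (S.filter (fun s => s.1 = r.2)).card := by
      rw [Finset.card_eq_sum_card_fiberwise (f := fun p => p.1) (t := R)
        (by intro p hp; replace hp : p ∈ T := hp; simp only [hT, Finset.mem_filter, Finset.mem_product] at hp
            exact hp.1.1)]
      refine Finset.sum_congr rfl fun r hr => ?_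
      have : T.filter (fun p => p.1 = r) = {r} ×ˢ (S.filter fun s => s.1 = r.2) := by
        ext p
        simp only [hT, Finset.mem_filter, Finset.mem_product, Finset.mem_singleton]
        constructor
        · rintro ⟨⟨⟨_, hs⟩, heq⟩, rfl⟩; exact ⟨rfl, hs, heq.symm⟩
        · rintro ⟨rfl, hs, heq⟩; exact ⟨⟨⟨hr, hs⟩, heq.symm⟩, rfl⟩
      rw [this, Finset.card_product, Finset.card_singleton, one_mul]
    have h1 : (V.card : ℝ) ≤ (T.card : ℝ) := by
      exact_mod_cast Finset.card_image_le
    refine h1.trans ?_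
    rw [hTcard]
    push_cast
    calc ∑ r ∈ R, ((S.filter (fun s => s.1 = r.2)).card : ℝ)
        ≤ ∑ _r ∈ R, ℓ := by
          refine Finset.sum_le_sum fun r _ => ?_
          by_cases hb : r.2 ∈ S.image Prod.fst
          · exact hS _ hb
          · have : S.filter (fun s => s.1 = r.2) = ∅ := by
              refine Finset.filter_eq_empty_iff.mpr fun s hs => ?_
              intro heq
              exact hb (Finset.mem_image.mpr ⟨s, hs, heq⟩)
            simp [this, hl.le]
      _ = (R.card : ℝ) * ℓ := by rw [Finset.sum_const, nsmul_eq_mul]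
  · -- V ⊆ πA R ×ˢ πC S
    have hsub : V ⊆ (R.image Prod.fst) ×ˢ (S.image Prod.snd) := by
      intro v hv
      simp only [hV, hT, Finset.mem_image, Finset.mem_filter, Finset.mem_product] at hv ⊢
      obtain ⟨p, ⟨⟨hr, hs⟩, _⟩, rfl⟩ := hv
      exact ⟨⟨p.1, hr, rfl⟩, ⟨p.2, hs, rfl⟩⟩
    have h1 : (V.card : ℝ) ≤ ((R.image Prod.fst).card : ℝ) * ((S.image Prod.snd).card : ℝ) := by
      have := Finset.card_le_card hsub
      rw [Finset.card_product] at this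
      exact_mod_cast this
    have hA : ((R.image Prod.fst).card : ℝ) ≤ (R.card : ℝ) / h := by
      rw [le_div_iff₀ hh]
      have hRcard : R.card = ∑ a ∈ R.image Prod.fst, (R.filter (fun p => p.1 = a)).card :=
        Finset.card_eq_sum_card_fiberwise (fun p hp => Finset.mem_image_of_mem _ hp)
      calc ((R.image Prod.fst).card : ℝ) * h
          = ∑ a ∈ R.image Prod.fst, h := by rw [Finset.sum_const, nsmul_eq_mul]
        _ ≤ ∑ a ∈ R.image Prod.fst, ((R.filter (fun p => p.1 = a)).card : ℝ) :=
            Finset.sum_le_sum fun a ha => hR a ha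
        _ = (R.card : ℝ) := by rw [hRcard]; push_cast; ring
    have hC : ((S.image Prod.snd).card : ℝ) ≤ (S.card : ℝ) := by
      exact_mod_cast Finset.card_image_le
    calc (V.card : ℝ) ≤ ((R.image Prod.fst).card : ℝ) * ((S.image Prod.snd).card : ℝ) := h1
      _ ≤ ((R.card : ℝ) / h) * (S.card : ℝ) := by
          apply mul_le_mul hA hC (by positivity) (by positivity)
      _ = (S.card : ℝ) * ((R.card : ℝ) / h) := mul_comm _ _
end

section
/- Let D be a database consisting of three finite binary relations R ⊆ A×B, S ⊆ B×C, T ⊆ C×A, and let |D| = |R| + |S| + |T|. Then the number of triangles, i.e. the number of triples (a,b,c) with (a,b) ∈ R, (b,c) ∈ S, (c,a) ∈ T, is at most |D|^{3/2}. -/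
/-- Loomis–Whitney / AGM bound instance: the number of triangles is at most
`(|R| + |S| + |T|)^(3/2)`. -/
theorem triangle_count_le_db_size_pow {α β γ : Type*}
    [DecidableEq α] [DecidableEq β] [DecidableEq γ]
    (R : Finset (α × β)) (S : Finset (β × γ)) (T : Finset (γ × α)) :
    ((((R ×ˢ S ×ˢ T).filter
        (fun p => p.1.2 = p.2.1.1 ∧ p.2.1.2 = p.2.2.1 ∧ p.2.2.2 = p.1.1)).card : ℝ) ≤
      ((R.card : ℝ) + (S.card : ℝ) + (T.card : ℝ)) ^ ((3 : ℝ) / 2)) := by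
  classical
  set n : ℕ := R.card + S.card + T.card with hn
  set k : ℕ := Nat.sqrt n with hk
  set Tr : Finset ((α × β) × (β × γ) × (γ × α)) :=
    (R ×ˢ S ×ˢ T).filter
      (fun p => p.1.2 = p.2.1.1 ∧ p.2.1.2 = p.2.2.1 ∧ p.2.2.2 = p.1.1) with hTr
  set deg : β → ℕ := fun b => (S.filter (fun s => s.1 = b)).card with hdeg
  -- membership facts for triangles
  have hmem : ∀ p ∈ Tr, p.1 ∈ R ∧ p.2.1 ∈ S ∧ p.2.2 ∈ T ∧
      p.1.2 = p.2.1.1 ∧ p.2.1.2 = p.2.2.1 ∧ p.2.2.2 = p.1.1 := by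
    intro p hp
    rw [hTr, Finset.mem_filter, Finset.mem_product, Finset.mem_product] at hp
    tauto
  -- split into light and heavy
  have hsplit : Tr.card =
      (Tr.filter (fun p => deg p.1.2 ≤ k)).card +
      (Tr.filter (fun p => ¬ deg p.1.2 ≤ k)).card :=
    (Finset.card_filter_add_card_filter_not _).symm
  -- light bound
  have hlight : (Tr.filter (fun p => deg p.1.2 ≤ k)).card ≤ R.card * k := by
    set P : Finset ((α × β) × (β × γ)) :=
      ((R.filter (fun r => deg r.2 ≤ k)) ×ˢ S).filter (fun q => q.2.1 = q.1.2) with hP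
    have step1 : (Tr.filter (fun p => deg p.1.2 ≤ k)).card ≤ P.card := by
      apply Finset.card_le_card_of_injOn (fun p => (p.1, p.2.1))
      · intro p hp
        rw [Finset.mem_coe, Finset.mem_filter] at hp
        obtain ⟨hpT, hpl⟩ := hp
        obtain ⟨h1, h2, _, h4, _, _⟩ := hmem p hpT
        rw [hP, Finset.mem_coe, Finset.mem_filter, Finset.mem_product, Finset.mem_filter]
        exact ⟨⟨⟨h1, hpl⟩, h2⟩, h4.symm⟩
      · intro p hp q hq hpq
        rw [Finset.mem_coe, Finset.mem_filter] at hp hq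
        obtain ⟨_, _, _, _, h5p, h6p⟩ := hmem p hp.1
        obtain ⟨_, _, _, _, h5q, h6q⟩ := hmem q hq.1
        have hpq' : (p.1, p.2.1) = (q.1, q.2.1) := hpq
        have e1 : p.1 = q.1 := (Prod.ext_iff.mp hpq').1
        have e2 : p.2.1 = q.2.1 := (Prod.ext_iff.mp hpq').2
        have e3 : p.2.2 = q.2.2 := by
          have h : p.2.2 = (p.2.1.2, p.1.1) := Prod.ext h5p.symm h6p
          have hq' : q.2.2 = (q.2.1.2, q.1.1) := Prod.ext h5q.symm h6q
          rw [h, hq', e1, e2]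
        exact Prod.ext e1 (Prod.ext e2 e3)
    have step2 : P.card ≤ R.card * k := by
      have hfib : ∀ q ∈ P, q.1 ∈ R.filter (fun r => deg r.2 ≤ k) := by
        intro q hq
        rw [hP, Finset.mem_filter, Finset.mem_product] at hq
        exact hq.1.1
      rw [Finset.card_eq_sum_card_fiberwise hfib]
      calc ∑ r ∈ R.filter (fun r => deg r.2 ≤ k),
            (P.filter (fun q => q.1 = r)).card
          ≤ ∑ r ∈ R.filter (fun r => deg r.2 ≤ k), k := by
            apply Finset.sum_le_sum
            intro r hr
            rw [Finset.mem_filter] at hr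
            calc (P.filter (fun q => q.1 = r)).card ≤ deg r.2 := by
                  apply Finset.card_le_card_of_injOn (fun q => q.2)
                  · intro q hq
                    rw [Finset.mem_coe, Finset.mem_filter] at hq
                    obtain ⟨hqP, hq1⟩ := hq
                    rw [hP, Finset.mem_filter, Finset.mem_product] at hqP
                    rw [Finset.mem_coe, Finset.mem_filter]
                    refine ⟨hqP.1.2, ?_⟩
                    rw [hqP.2, hq1]
                  · intro q hq q' hq' hqq
                    rw [Finset.mem_coe, Finset.mem_filter] at hq hq'
                    exact Prod.ext (hq.2.trans hq'.2.symm) hqq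
              _ ≤ k := hr.2
        _ ≤ R.card * k := by
            rw [Finset.sum_const, smul_eq_mul]
            exact Nat.mul_le_mul_right k (Finset.card_filter_le _ _)
    exact step1.trans step2
  -- heavy vertex set
  set Bh : Finset β := (S.image Prod.fst).filter (fun b => k < deg b) with hBh
  -- heavy bound
  have hheavy : (Tr.filter (fun p => ¬ deg p.1.2 ≤ k)).card ≤ T.card * Bh.card := by
    have : (Tr.filter (fun p => ¬ deg p.1.2 ≤ k)).card ≤ (T ×ˢ Bh).card := by
      apply Finset.card_le_card_of_injOn (fun p => (p.2.2, p.1.2))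
      · intro p hp
        rw [Finset.mem_coe, Finset.mem_filter] at hp
        obtain ⟨hpT, hph⟩ := hp
        obtain ⟨h1, h2, h3, h4, _, _⟩ := hmem p hpT
        rw [Finset.mem_coe, Finset.mem_product]
        refine ⟨h3, ?_⟩
        rw [hBh, Finset.mem_filter]
        refine ⟨Finset.mem_image.mpr ⟨p.2.1, h2, h4.symm⟩, lt_of_not_ge hph⟩
      · intro p hp q hq hpq
        rw [Finset.mem_coe, Finset.mem_filter] at hp hq
        obtain ⟨_, _, _, h4p, h5p, h6p⟩ := hmem p hp.1
        obtain ⟨_, _, _, h4q, h5q, h6q⟩ := hmem q hq.1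
        have hpq' : (p.2.2, p.1.2) = (q.2.2, q.1.2) := hpq
        have e1 : p.2.2 = q.2.2 := (Prod.ext_iff.mp hpq').1
        have e2 : p.1.2 = q.1.2 := (Prod.ext_iff.mp hpq').2
        have e3 : p.1 = q.1 := Prod.ext (by rw [← h6p, ← h6q, e1]) e2
        have e4 : p.2.1 = q.2.1 :=
          Prod.ext (by rw [← h4p, ← h4q, e2]) (by rw [h5p, h5q, e1])
        exact Prod.ext e3 (Prod.ext e4 e1)
    simpa [Finset.card_product] using this
  -- heavy set is small : (k+1) * Bh.card ≤ S.card
  have hBhsmall : (k + 1) * Bh.card ≤ S.card := by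
    have hS : S.card = ∑ b ∈ S.image Prod.fst, deg b := by
      apply Finset.card_eq_sum_card_fiberwise
      intro s hs
      exact Finset.mem_image.mpr ⟨s, hs, rfl⟩
    calc (k + 1) * Bh.card = ∑ _b ∈ Bh, (k + 1) := by
          rw [Finset.sum_const, smul_eq_mul, Nat.mul_comm]
      _ ≤ ∑ b ∈ Bh, deg b := by
          apply Finset.sum_le_sum
          intro b hb
          rw [hBh, Finset.mem_filter] at hb
          exact hb.2
      _ ≤ ∑ b ∈ S.image Prod.fst, deg b := by
          apply Finset.sum_le_sum_of_subset
          rw [hBh]; exact Finset.filter_subset _ _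
      _ = S.card := hS.symm
  -- now the real arithmetic
  have hcast : ((R.card : ℝ) + (S.card : ℝ) + (T.card : ℝ)) = (n : ℝ) := by
    rw [hn]; push_cast; ring
  rw [hcast]
  rcases Nat.eq_zero_or_pos n with hn0 | hn0
  · have hR : R.card = 0 := by omega
    have : Tr.card = 0 := by
      rw [Finset.card_eq_zero] at hR ⊢
      rw [hTr, hR]
      simp
    rw [hTr] at this
    rw [this, hn0]
    norm_num
  · set s : ℝ := Real.sqrt n with hs
    have hs0 : (0 : ℝ) < s := Real.sqrt_pos.mpr (by exact_mod_cast hn0)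
    have hs2 : s * s = (n : ℝ) := Real.mul_self_sqrt (by positivity)
    have hks : (k : ℝ) ≤ s := by
      rw [hs, show ((k : ℝ)) = Real.sqrt ((k : ℝ) * (k : ℝ)) from
        (Real.sqrt_mul_self (Nat.cast_nonneg _)).symm]
      apply Real.sqrt_le_sqrt
      exact_mod_cast Nat.sqrt_le n
    have hsk1 : s < (k : ℝ) + 1 := by
      rw [hs]
      refine (Real.sqrt_lt' (Nat.cast_add_one_pos k)).mpr ?_
      have := Nat.lt_succ_sqrt n
      have h2 : (n : ℝ) < ((k + 1 : ℕ) : ℝ) * ((k + 1 : ℕ) : ℝ) := by exact_mod_cast this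
      push_cast at h2
      nlinarith [h2]
    have hpow : ((n : ℝ)) ^ ((3 : ℝ)/2) = (n : ℝ) * s := by
      rw [show (3 : ℝ)/2 = 1 + 1/2 by norm_num,
        Real.rpow_add (by exact_mod_cast hn0), Real.rpow_one, hs,
        Real.sqrt_eq_rpow]
    rewrite [hpow]
    have hN : ((Tr.card : ℝ)) ≤ (R.card : ℝ) * k + (T.card : ℝ) * Bh.card := by
      have := hsplit
      have h1 := hlight
      have h2 := hheavy
      have : Tr.card ≤ R.card * k + T.card * Bh.card := by omega
      exact_mod_cast this
    have hB : ((k : ℝ) + 1) * Bh.card ≤ (S.card : ℝ) := by exact_mod_cast hBhsmall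
    have hSn : (S.card : ℝ) ≤ (n : ℝ) := by
      have : S.card ≤ n := by omega
      exact_mod_cast this
    have hRT : (R.card : ℝ) + (T.card : ℝ) ≤ (n : ℝ) := by
      have : R.card + T.card ≤ n := by omega
      exact_mod_cast this
    have hTB : (T.card : ℝ) * Bh.card ≤ (T.card : ℝ) * s := by
      have hTn : (0 : ℝ) ≤ (T.card : ℝ) := Nat.cast_nonneg _
      have hBn : (0 : ℝ) ≤ (Bh.card : ℝ) := Nat.cast_nonneg _
      apply le_of_mul_le_mul_right _ hs0
      nlinarith [mul_le_mul_of_nonneg_left hB hTn, mul_le_mul_of_nonneg_left hSn hTn,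
        mul_le_mul_of_nonneg_left hsk1.le (mul_nonneg hTn hBn)]
    have h1 : (R.card : ℝ) * k ≤ (R.card : ℝ) * s :=
      mul_le_mul_of_nonneg_left hks (Nat.cast_nonneg _)
    have h2 : ((R.card : ℝ) + (T.card : ℝ)) * s ≤ (n : ℝ) * s :=
      mul_le_mul_of_nonneg_right hRT hs0.le
    have hgoal : ((Tr.card : ℝ)) ≤ (n : ℝ) * s := by
      have h3 : ((R.card : ℝ) + (T.card : ℝ)) * s
          = (R.card : ℝ) * s + (T.card : ℝ) * s := by ring
      linarith [hN, hTB, h1, h2]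
    calc ((((R ×ˢ S ×ˢ T).filter
        (fun p => p.1.2 = p.2.1.1 ∧ p.2.1.2 = p.2.2.1 ∧ p.2.2.2 = p.1.1)).card : ℝ))
        = (Tr.card : ℝ) := by rw [hTr]
      _ ≤ (n : ℝ) * s := hgoal
end
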